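/- Every access sequence in a binary search tree T consisting of M cursor moves and R rotations can be simulated by a restricted access sequence in a tree T' (with two extra sentinel keys) using at most 4M + 3R cursor moves and 2M + R rotations, where in the restricted sequence every visited or rotated node has depth less than 3 and the cursor returns to the root after every rotation. -/

import Mathlib

/-! A model of binary search trees with a cursor.  Allowed operations: move the
cursor to the left child, right child or parent, and rotate the node at the
cursor upward.  We formalize the simulation lemma: any access sequence with `M`
moves and `R` rotations on a tree `T` can be simulated by a *restricted*
sequence on a tree `T'` (with two sentinel keys `⊥` and `⊤`) using at most
`4M + 3R` moves and `2M + R` rotations, where every visited or rotated node has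
depth `< 3` and the cursor returns to the root after every rotation. -/

/-- A finite binary tree with keys at its nodes. -/
inductive KTree (α : Type*) where
  | leaf : KTree α
  | node : KTree α → α → KTree α → KTree α

/-- Direction from a node to one of its children. -/
inductive Dir where
  | L : Dir
  | R : Dir
deriving DecidableEq

/-- A position in a tree: the list of directions from the root. -/
abbrev TPath := List Dir

/-- The subtree rooted at a given position, if it exists. -/
def subtreeAt {α : Type*} : KTree α → TPath → Option (KTree α)
  | t, [] => some t
  | KTree.leaf, _ :: _ => none
  | KTree.node l _ _, Dir.L :: p => subtreeAt l p
  | KTree.node _ _ r, Dir.R :: p => subtreeAt r p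

/-- The key stored at a given position, if there is a node there. -/
def keyAt {α : Type*} (t : KTree α) (p : TPath) : Option α :=
  match subtreeAt t p with
  | some (KTree.node _ x _) => some x
  | _ => none

/-- Rotate the child of the root in direction `d` upward (a single rotation). -/
def rotateRoot {α : Type*} : KTree α → Dir → KTree α
  | KTree.node (KTree.node a x b) y c, Dir.L => KTree.node a x (KTree.node b y c)
  | KTree.node a y (KTree.node b x c), Dir.R => KTree.node (KTree.node a y b) x c
  | t, _ => t

/-- Rotate the node at position `p` (with `p ≠ []`) upward. -/
def rotateAt {α : Type*} : KTree α → TPath → KTree α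
  | t, [] => t
  | t, [d] => rotateRoot t d
  | KTree.node l x r, Dir.L :: p => KTree.node (rotateAt l p) x r
  | KTree.node l x r, Dir.R :: p => KTree.node l x (rotateAt r p)
  | KTree.leaf, _ => KTree.leaf

/-- The operations of the BST-with-cursor model. -/
inductive Op where
  | up : Op                -- move the cursor to the parent
  | down : Dir → Op        -- move the cursor to a child
  | rotate : Op            -- rotate the node at the cursor upward
deriving DecidableEq

/-- `Op.rotate` counts as a rotation; the other operations are cursor moves. -/
def Op.isMove : Op → Bool
  | Op.rotate => false
  | _ => true

/-- One execution step on a state (tree, cursor position).  After a rotation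
    the rotated node sits where its parent was, so the cursor path shortens. -/
def step {α : Type*} : KTree α × TPath → Op → KTree α × TPath
  | (t, p), Op.up => (t, p.dropLast)
  | (t, p), Op.down d => (t, p ++ [d])
  | (t, p), Op.rotate => (rotateAt t p, p.dropLast)

/-- The list of states reached after each operation. -/
def run {α : Type*} : KTree α × TPath → List Op → List (KTree α × TPath)
  | _, [] => []
  | s, o :: os => step s o :: run (step s o) os

/-- Validity of an operation sequence from a given state: the cursor always
    stays on an existing node, `up` and `rotate` are not applied at the root. -/
def ValidOps {α : Type*} : KTree α × TPath → List Op → Prop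
  | _, [] => True
  | (t, p), o :: os =>
      (match o with
        | Op.up => p ≠ []
        | Op.down d => (keyAt t (p ++ [d])).isSome
        | Op.rotate => p ≠ []) ∧ ValidOps (step (t, p) o) os

/-- The sequence of keys visited by the cursor (initial state included). -/
def visitedKeys {α : Type*} (t : KTree α) (ops : List Op) : List α :=
  ((t, ([] : TPath)) :: run (t, []) ops).filterMap fun s => keyAt s.1 s.2

/-- The multiset of keys of a tree. -/
def keys {α : Type*} : KTree α → Multiset α
  | KTree.leaf => 0
  | KTree.node l x r => x ::ₘ (keys l + keys r)

/-- A restricted access sequence: every node visited by the cursor (hence every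
    rotated node) has depth less than `3`, and after each rotation the cursor
    returns to the root before any further rotation is performed. -/
def Restricted {α : Type*} (t : KTree α) (ops : List Op) : Prop :=
  let states := (t, ([] : TPath)) :: run (t, []) ops
  (∀ s ∈ states, s.2.length < 3) ∧
  ∀ i : Fin ops.length, ops.get i = Op.rotate →
    ∃ j : Fin states.length, (i : ℕ) < (j : ℕ) ∧ (states.get j).2 = [] ∧
      ∀ l : Fin ops.length, (i : ℕ) < (l : ℕ) → (l : ℕ) < (j : ℕ) →
        ops.get l ≠ Op.rotate

namespace BSTSim

variable {α : Type*} {γ : Type*}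

/-- The path component of a step depends only on the path. -/
def pstep (p : TPath) : Op → TPath
  | Op.down d => p ++ [d]
  | _ => p.dropLast

def pexec (p : TPath) (ops : List Op) : TPath := ops.foldl pstep p

def exec (s : KTree α × TPath) (ops : List Op) : KTree α × TPath := ops.foldl step s

lemma step_snd (s : KTree α × TPath) (o : Op) : (step s o).2 = pstep s.2 o := by
  obtain ⟨t, p⟩ := s; cases o <;> rfl

@[simp] lemma exec_nil (s : KTree α × TPath) : exec s [] = s := rfl

@[simp] lemma exec_cons (s : KTree α × TPath) (o : Op) (ops : List Op) :
    exec s (o :: ops) = exec (step s o) ops := rfl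

@[simp] lemma pexec_nil (p : TPath) : pexec p [] = p := rfl

@[simp] lemma pexec_cons (p : TPath) (o : Op) (ops : List Op) :
    pexec p (o :: ops) = pexec (pstep p o) ops := rfl

lemma run_append (s : KTree α × TPath) (a b : List Op) :
    run s (a ++ b) = run s a ++ run (exec s a) b := by
  induction a generalizing s with
  | nil => rfl
  | cons o a ih => simp [run, ih]

lemma validOps_append (s : KTree α × TPath) (a b : List Op) :
    ValidOps s (a ++ b) ↔ ValidOps s a ∧ ValidOps (exec s a) b := by
  induction a generalizing s with
  | nil => simp [ValidOps]
  | cons o a ih =>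
    obtain ⟨t, p⟩ := s
    show (_ ∧ ValidOps _ (a ++ b)) ↔ (_ ∧ ValidOps _ a) ∧ _
    rw [ih]
    tauto

def vKeys (s : KTree α × TPath) (ops : List Op) : List α :=
  (s :: run s ops).filterMap fun s => keyAt s.1 s.2

lemma visitedKeys_eq (t : KTree α) (ops : List Op) :
    visitedKeys t ops = vKeys (t, []) ops := rfl

lemma keyAt_of {t : KTree α} {p : TPath} {l : KTree α} {x : α} {r : KTree α}
    (h : subtreeAt t p = some (KTree.node l x r)) : keyAt t p = some x := by
  unfold keyAt; rw [h]

lemma vKeys_cons (s : KTree α × TPath) (o : Op) (ops : List Op) (x : α)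
    (h : keyAt s.1 s.2 = some x) :
    vKeys s (o :: ops) = x :: vKeys (step s o) ops := by
  simp [vKeys, run, List.filterMap_cons, h]

lemma vKeys_eq_cons (s : KTree α × TPath) (ops : List Op) (x : α)
    (h : keyAt s.1 s.2 = some x) :
    vKeys s ops = x :: (run s ops).filterMap (fun s => keyAt s.1 s.2) := by
  simp [vKeys, List.filterMap_cons, h]

lemma vKeys_append (s : KTree α × TPath) (a b : List Op) :
    vKeys s (a ++ b) = vKeys s a ++ (run (exec s a) b).filterMap (fun s => keyAt s.1 s.2) := by
  rw [vKeys, run_append, ← List.cons_append, List.filterMap_append]; rfl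

end BSTSim

namespace BSTSim

variable {α : Type*} {γ : Type*}

/-- All paths along the run have length `< 3`. -/
def d3b : TPath → List Op → Bool
  | _, [] => true
  | p, o :: os => decide ((pstep p o).length < 3) && d3b (pstep p o) os

/-- The cursor reaches the root before any rotation occurs. -/
def rrB : TPath → List Op → Bool
  | [], _ => true
  | _, [] => false
  | p, o :: os => !(o == Op.rotate) && rrB (pstep p o) os

/-- After every rotation, the cursor reaches the root before the next rotation. -/
def r2b : TPath → List Op → Bool
  | _, [] => true
  | p, Op.rotate :: os => rrB p.dropLast os && r2b p.dropLast os
  | p, o :: os => r2b (pstep p o) os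

@[simp] lemma r2b_nil (p : TPath) : r2b p [] = true := rfl
@[simp] lemma rrB_nil_left (ops : List Op) : rrB [] ops = true := by cases ops <;> rfl
lemma rrB_cons_nil (d : Dir) (p : List Dir) : rrB (d :: p) [] = false := rfl
lemma rrB_cons_cons (d : Dir) (p : List Dir) (o : Op) (os : List Op) :
    rrB (d :: p) (o :: os) = (!(o == Op.rotate) && rrB (pstep (d :: p) o) os) := rfl
lemma r2b_up (p : TPath) (os : List Op) : r2b p (Op.up :: os) = r2b p.dropLast os := rfl
lemma r2b_down (p : TPath) (d : Dir) (os : List Op) :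
    r2b p (Op.down d :: os) = r2b (p ++ [d]) os := rfl
lemma r2b_rot (p : TPath) (os : List Op) :
    r2b p (Op.rotate :: os) = (rrB p.dropLast os && r2b p.dropLast os) := rfl

lemma d3b_append (p : TPath) (a b : List Op) :
    d3b p (a ++ b) = (d3b p a && d3b (pexec p a) b) := by
  induction a generalizing p with
  | nil => simp [d3b]
  | cons o a ih => simp [d3b, ih, Bool.and_assoc]

lemma rrB_append_of {p : TPath} {a : List Op} (h : rrB p a = true) (b : List Op) :
    rrB p (a ++ b) = true := by
  induction a generalizing p with
  | nil =>
    cases p with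
    | nil => simp
    | cons d p => rw [rrB_cons_nil] at h; exact absurd h (by simp)
  | cons o a ih =>
    cases p with
    | nil => simp
    | cons d p =>
      rw [List.cons_append, rrB_cons_cons, Bool.and_eq_true]
      rw [rrB_cons_cons, Bool.and_eq_true] at h
      exact ⟨h.1, ih h.2⟩

lemma r2b_append_of {p : TPath} {a b : List Op} (h1 : r2b p a = true)
    (h2 : pexec p a = []) (h3 : r2b [] b = true) : r2b p (a ++ b) = true := by
  induction a generalizing p with
  | nil => simpa [h2.symm ▸ h3] using (show p = [] from h2) ▸ h3
  | cons o a ih =>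
    cases o with
    | up =>
      rw [List.cons_append, r2b_up]
      exact ih (by simpa [r2b_up] using h1) (by simpa [pstep] using h2)
    | down d =>
      rw [List.cons_append, r2b_down]
      exact ih (by simpa [r2b_down] using h1) (by simpa [pstep] using h2)
    | rotate =>
      rw [List.cons_append, r2b_rot, Bool.and_eq_true]
      rw [r2b_rot, Bool.and_eq_true] at h1
      refine ⟨rrB_append_of h1.1 b, ih h1.2 (by simpa [pstep] using h2)⟩

lemma d3_run : ∀ (ops : List Op) (s : KTree α × TPath), d3b s.2 ops = true →
    ∀ x ∈ run s ops, x.2.length < 3 := by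
  intro ops
  induction ops with
  | nil => intro s _ x hx; simp [run] at hx
  | cons o os ih =>
    intro s h x hx
    rw [d3b, Bool.and_eq_true, decide_eq_true_eq] at h
    rw [run] at hx
    rcases List.mem_cons.mp hx with rfl | hx
    · rw [step_snd]; exact h.1
    · exact ih (step s o) (by rw [step_snd]; exact h.2) x hx

lemma rr_sound : ∀ (ops : List Op) (s : KTree α × TPath), rrB s.2 ops = true →
    ∃ j : Fin (s :: run s ops).length,
      (((s :: run s ops).get j).2 = []) ∧
      ∀ l : Fin ops.length, (l : ℕ) < (j : ℕ) → ops.get l ≠ Op.rotate := by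
  intro ops
  induction ops with
  | nil =>
    intro s h
    cases hp : s.2 with
    | nil => exact ⟨⟨0, by simp⟩, hp, fun l hl => absurd l.2 (by simp)⟩
    | cons d p => rw [hp, rrB_cons_nil] at h; exact absurd h (by simp)
  | cons o os ih =>
    intro s h
    cases hp : s.2 with
    | nil => exact ⟨⟨0, by simp⟩, hp, fun l hl => absurd hl (Nat.not_lt_zero _)⟩
    | cons d p =>
      rw [hp, rrB_cons_cons, Bool.and_eq_true] at h
      have h2 : rrB (step s o).2 os = true := by
        rw [step_snd, hp]; exact h.2
      obtain ⟨j', hj1, hj2⟩ := ih (step s o) h2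
      refine ⟨⟨j'.1 + 1, by simpa [run] using Nat.succ_lt_succ j'.2⟩, hj1, ?_⟩
      intro l hl
      obtain ⟨lv, hlv⟩ := l
      cases lv with
      | zero =>
        intro hrot
        rw [show (⟨0, hlv⟩ : Fin (o :: os).length).val = 0 from rfl] at *
        have : o = Op.rotate := hrot
        subst this
        simp at h
      | succ lv' =>
        intro hrot
        exact hj2 ⟨lv', Nat.lt_of_succ_lt_succ hlv⟩ (Nat.lt_of_succ_lt_succ hl) hrot

lemma r2_sound : ∀ (ops : List Op) (s : KTree α × TPath), r2b s.2 ops = true →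
    ∀ i : Fin ops.length, ops.get i = Op.rotate →
    ∃ j : Fin (s :: run s ops).length, (i : ℕ) < (j : ℕ) ∧
      (((s :: run s ops).get j).2 = []) ∧
      ∀ l : Fin ops.length, (i : ℕ) < (l : ℕ) → (l : ℕ) < (j : ℕ) →
        ops.get l ≠ Op.rotate := by
  intro ops
  induction ops with
  | nil => intro s _ i; exact absurd i.2 (by simp)
  | cons o os ih =>
    intro s h i hi
    obtain ⟨iv, hiv⟩ := i
    cases iv with
    | zero =>
      have ho : o = Op.rotate := hi
      subst ho
      rw [r2b_rot, Bool.and_eq_true] at h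
      have h1 : rrB (step s Op.rotate).2 os = true := by
        rw [step_snd]; exact h.1
      obtain ⟨j', hj1, hj2⟩ := rr_sound os (step s Op.rotate) h1
      refine ⟨⟨j'.1 + 1, by simpa [run] using Nat.succ_lt_succ j'.2⟩,
        Nat.succ_pos _, hj1, ?_⟩
      intro l hl1 hl2
      obtain ⟨lv, hlv⟩ := l
      cases lv with
      | zero => exact absurd hl1 (by simp)
      | succ lv' =>
        exact hj2 ⟨lv', Nat.lt_of_succ_lt_succ hlv⟩ (Nat.lt_of_succ_lt_succ hl2)
    | succ iv' =>
      have h' : r2b (step s o).2 os = true := by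
        rw [step_snd]
        cases o with
        | up => rw [r2b_up] at h; exact h
        | down d => rw [r2b_down] at h; exact h
        | rotate => rw [r2b_rot, Bool.and_eq_true] at h; exact h.2
      obtain ⟨j', hj0, hj1, hj2⟩ := ih (step s o) h' ⟨iv', Nat.lt_of_succ_lt_succ hiv⟩ hi
      refine ⟨⟨j'.1 + 1, by simpa [run] using Nat.succ_lt_succ j'.2⟩,
        Nat.succ_lt_succ hj0, hj1, ?_⟩
      intro l hl1 hl2
      obtain ⟨lv, hlv⟩ := l
      cases lv with
      | zero => exact absurd hl1 (Nat.not_lt_zero _)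
      | succ lv' =>
        exact hj2 ⟨lv', Nat.lt_of_succ_lt_succ hlv⟩ (Nat.lt_of_succ_lt_succ hl1)
          (Nat.lt_of_succ_lt_succ hl2)

lemma restricted_of (t : KTree α) (ops : List Op) (h3 : d3b [] ops = true)
    (h2 : r2b [] ops = true) : Restricted t ops := by
  refine ⟨?_, ?_⟩
  · intro s hs
    rcases List.mem_cons.mp hs with rfl | hs
    · simp
    · exact d3_run ops (t, []) h3 s hs
  · exact r2_sound ops (t, []) h2

end BSTSim

namespace BSTSim

variable {α : Type*} {γ : Type*}

def tmap (f : α → γ) : KTree α → KTree γ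
  | .leaf => .leaf
  | .node l x r => .node (tmap f l) (f x) (tmap f r)

lemma keys_tmap (f : α → γ) (t : KTree α) : keys (tmap f t) = (keys t).map f := by
  induction t with
  | leaf => simp [tmap, keys]
  | node l x r ihl ihr => simp [tmap, keys, ihl, ihr]

/-- Left and right context of the simulating tree: `((SA, kA), (kB, SB))`
represents a tree `node (node SA kA l') x' (node r' kB SB)` when the
`T`-cursor sits on a node with key `x'` and (mapped) subtrees `l'`, `r'`. -/
abbrev Ctx (γ : Type*) := (KTree γ × γ) × (γ × KTree γ)

def ctxs (f : α → γ) : KTree α → TPath → Ctx γ → Ctx γ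
  | _, [], acc => acc
  | .node l x r, Dir.L :: p, ((SA, kA), (kB, SB)) =>
      ctxs f l p ((SA, kA), (f x, .node (tmap f r) kB SB))
  | .node l x r, Dir.R :: p, ((SA, kA), (kB, SB)) =>
      ctxs f r p ((.node SA kA (tmap f l), f x), (kB, SB))
  | .leaf, _ :: _, acc => acc

@[simp] lemma ctxs_nil (f : α → γ) (t : KTree α) (acc : Ctx γ) : ctxs f t [] acc = acc := by
  cases t <;> rfl

@[simp] lemma subtreeAt_nil (t : KTree α) : subtreeAt t [] = some t := by
  cases t <;> rfl

lemma subtreeAt_append (t : KTree α) (p q : TPath) :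
    subtreeAt t (p ++ q) = (subtreeAt t p).bind (fun s => subtreeAt s q) := by
  induction p generalizing t with
  | nil => simp [subtreeAt]
  | cons d p ih =>
    cases t with
    | leaf => simp [subtreeAt]
    | node l x r => cases d <;> simp [subtreeAt, ih]

lemma ctxs_append (f : α → γ) (t : KTree α) (p q : TPath) (s : KTree α)
    (h : subtreeAt t p = some s) (acc : Ctx γ) :
    ctxs f t (p ++ q) acc = ctxs f s q (ctxs f t p acc) := by
  induction p generalizing t acc with
  | nil =>
    obtain rfl : t = s := by simpa using h
    rw [ctxs_nil, List.nil_append]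
  | cons d p ih =>
    cases t with
    | leaf => simp [subtreeAt] at h
    | node l x r =>
      obtain ⟨⟨SA, kA⟩, kB, SB⟩ := acc
      cases d with
      | L => exact ih l (by simpa [subtreeAt] using h) _
      | R => exact ih r (by simpa [subtreeAt] using h) _

lemma rotateAt_concat (f : α → γ) :
    ∀ (q : TPath) (t : KTree α) (d : Dir) (s : KTree α), subtreeAt t q = some s →
    subtreeAt (rotateAt t (q ++ [d])) q = some (rotateRoot s d) ∧
    ∀ acc : Ctx γ, ctxs f (rotateAt t (q ++ [d])) q acc = ctxs f t q acc := by
  intro q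
  induction q with
  | nil =>
    intro t d s h
    obtain rfl : t = s := by simpa using h
    constructor
    · show subtreeAt (rotateAt t [d]) [] = _
      rw [show rotateAt t [d] = rotateRoot t d from by cases t <;> cases d <;> rfl]
      exact subtreeAt_nil _
    · intro acc; rw [ctxs_nil, ctxs_nil]
  | cons e q ih =>
    intro t d s h
    cases t with
    | leaf => simp [subtreeAt] at h
    | node l x r =>
      cases e with
      | L =>
        have h' : subtreeAt l q = some s := by simpa [subtreeAt] using h
        have hrot : rotateAt (KTree.node l x r) (Dir.L :: (q ++ [d])) =
            KTree.node (rotateAt l (q ++ [d])) x r := by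
          rcases q with _ | ⟨e', q'⟩ <;> rfl
        rw [List.cons_append, hrot]
        refine ⟨by simpa [subtreeAt] using (ih l d s h').1, ?_⟩
        intro acc
        obtain ⟨⟨SA, kA⟩, kB, SB⟩ := acc
        exact (ih l d s h').2 _
      | R =>
        have h' : subtreeAt r q = some s := by simpa [subtreeAt] using h
        have hrot : rotateAt (KTree.node l x r) (Dir.R :: (q ++ [d])) =
            KTree.node l x (rotateAt r (q ++ [d])) := by
          rcases q with _ | ⟨e', q'⟩ <;> rfl
        rw [List.cons_append, hrot]
        refine ⟨by simpa [subtreeAt] using (ih r d s h').1, ?_⟩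
        intro acc
        obtain ⟨⟨SA, kA⟩, kB, SB⟩ := acc
        exact (ih r d s h').2 _

def countM (ops : List Op) : ℕ := (ops.filter fun o => o.isMove).length
def countR (ops : List Op) : ℕ := (ops.filter fun o => o = Op.rotate).length

lemma countM_append (a b : List Op) : countM (a ++ b) = countM a + countM b := by
  simp [countM, List.filter_append]

lemma countR_append (a b : List Op) : countR (a ++ b) = countR a + countR b := by
  simp [countR, List.filter_append]

/-- Gluing a chunk onto the rest of a simulating sequence. -/
lemma glue (c rest : List Op) (S S' : KTree γ) (y y' : γ) (mid : List γ) (K : List γ)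
    (hexec : exec (S, ([] : TPath)) c = (S', ([] : TPath)))
    (hvalC : ValidOps (S, ([] : TPath)) c)
    (hd3 : d3b [] c = true) (hr2 : r2b [] c = true) (hpe : pexec [] c = [])
    (hkeysC : vKeys (S, ([] : TPath)) c = y :: (mid ++ [y']))
    (hkeyS' : keyAt S' [] = some y')
    (hvalR : ValidOps (S', ([] : TPath)) rest)
    (hd3R : d3b [] rest = true) (hr2R : r2b [] rest = true)
    (hK : K.Sublist (vKeys (S', ([] : TPath)) rest)) :
    ValidOps (S, ([] : TPath)) (c ++ rest) ∧ d3b [] (c ++ rest) = true ∧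
    r2b [] (c ++ rest) = true ∧
    (y :: K).Sublist (vKeys (S, ([] : TPath)) (c ++ rest)) := by
  refine ⟨(validOps_append _ c rest).mpr ⟨hvalC, by rw [hexec]; exact hvalR⟩, ?_, ?_, ?_⟩
  · rw [d3b_append, hpe, hd3, hd3R]; rfl
  · exact r2b_append_of hr2 hpe hr2R
  · rw [vKeys_append, hexec, hkeysC, List.cons_append]
    have hW := vKeys_eq_cons (S', ([] : TPath)) rest y' hkeyS'
    set W := (run (S', ([] : TPath)) rest).filterMap (fun s => keyAt s.1 s.2) with hWdef
    refine List.Sublist.cons₂ y ?_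
    have h1 : K.Sublist (y' :: W) := hW ▸ hK
    have h2 : (y' :: W).Sublist (mid ++ y' :: W) := List.sublist_append_right mid _
    have h3 : (mid ++ [y']) ++ W = mid ++ y' :: W := by simp
    rw [h3]
    exact h1.trans h2
end BSTSim

namespace BSTSim
variable {α : Type*} {γ : Type*}

@[simp] lemma rotateRoot_L (a b c : KTree γ) (x y : γ) :
    rotateRoot (KTree.node (KTree.node a x b) y c) Dir.L =
      KTree.node a x (KTree.node b y c) := by cases c <;> rfl

@[simp] lemma rotateRoot_R (a b c : KTree γ) (x y : γ) :
    rotateRoot (KTree.node a y (KTree.node b x c)) Dir.R =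
      KTree.node (KTree.node a y b) x c := by cases a <;> rfl

@[simp] lemma rotateAt_one (t : KTree γ) (d : Dir) : rotateAt t [d] = rotateRoot t d := by
  cases t <;> cases d <;> rfl

@[simp] lemma rotateAt_consL (l r : KTree γ) (x : γ) (e : Dir) (p : TPath) :
    rotateAt (KTree.node l x r) (Dir.L :: e :: p) = KTree.node (rotateAt l (e :: p)) x r := rfl

@[simp] lemma rotateAt_consR (l r : KTree γ) (x : γ) (e : Dir) (p : TPath) :
    rotateAt (KTree.node l x r) (Dir.R :: e :: p) = KTree.node l x (rotateAt r (e :: p)) := rfl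

@[simp] lemma keyAt_node_nil (l r : KTree γ) (x : γ) : keyAt (KTree.node l x r) [] = some x := rfl

@[simp] lemma keyAt_node_L (l r : KTree γ) (x : γ) (p : TPath) :
    keyAt (KTree.node l x r) (Dir.L :: p) = keyAt l p := rfl

@[simp] lemma keyAt_node_R (l r : KTree γ) (x : γ) (p : TPath) :
    keyAt (KTree.node l x r) (Dir.R :: p) = keyAt r p := rfl

@[simp] lemma step_down (t : KTree γ) (p : TPath) (d : Dir) :
    step (t, p) (Op.down d) = (t, p ++ [d]) := rfl

@[simp] lemma step_up (t : KTree γ) (p : TPath) :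
    step (t, p) Op.up = (t, p.dropLast) := rfl

@[simp] lemma step_rot (t : KTree γ) (p : TPath) :
    step (t, p) Op.rotate = (rotateAt t p, p.dropLast) := rfl

-- test on the down-left chunk
example (SA TL TR B : KTree γ) (kA fy fx : γ) :
    exec (KTree.node (KTree.node SA kA (KTree.node TL fy TR)) fx B, ([] : TPath))
      [Op.down Dir.L, Op.down Dir.R, Op.rotate, Op.up, Op.down Dir.L, Op.rotate] =
    (KTree.node (KTree.node SA kA TL) fy (KTree.node TR fx B), ([] : TPath)) := by
  simp [exec]

example (SA TL TR B : KTree γ) (kA fy fx : γ) :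
    vKeys (KTree.node (KTree.node SA kA (KTree.node TL fy TR)) fx B, ([] : TPath))
      [Op.down Dir.L, Op.down Dir.R, Op.rotate, Op.up, Op.down Dir.L, Op.rotate] =
    fx :: ([kA, fy, fy, fx, fy] ++ [fy]) := by
  simp [vKeys, run]

example (SA TL TR B : KTree γ) (kA fy fx : γ) :
    ValidOps (KTree.node (KTree.node SA kA (KTree.node TL fy TR)) fx B, ([] : TPath))
      [Op.down Dir.L, Op.down Dir.R, Op.rotate, Op.up, Op.down Dir.L, Op.rotate] := by
  simp [ValidOps]

end BSTSim

namespace BSTSim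
variable {α : Type*} {γ : Type*}

@[simp] lemma keyAt_leaf (p : TPath) : keyAt (KTree.leaf : KTree γ) p = none := by
  cases p <;> rfl

@[simp] lemma ctxs_consL (f : α → γ) (l r : KTree α) (x : α) (p : TPath)
    (SA : KTree γ) (kA kB : γ) (SB : KTree γ) :
    ctxs f (KTree.node l x r) (Dir.L :: p) ((SA, kA), (kB, SB)) =
      ctxs f l p ((SA, kA), (f x, KTree.node (tmap f r) kB SB)) := rfl

@[simp] lemma ctxs_consR (f : α → γ) (l r : KTree α) (x : α) (p : TPath)
    (SA : KTree γ) (kA kB : γ) (SB : KTree γ) :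
    ctxs f (KTree.node l x r) (Dir.R :: p) ((SA, kA), (kB, SB)) =
      ctxs f r p ((KTree.node SA kA (tmap f l), f x), (kB, SB)) := rfl

lemma subtree_concat_L {t : KTree α} {q : TPath} {s : KTree α}
    (h : subtreeAt t (q ++ [Dir.L]) = some s) :
    ∃ xq rq, subtreeAt t q = some (KTree.node s xq rq) := by
  have hb := subtreeAt_append t q [Dir.L]
  rw [h] at hb
  cases hq : subtreeAt t q with
  | none => rw [hq] at hb; simp at hb
  | some sq =>
    rw [hq] at hb
    cases sq with
    | leaf => simp [subtreeAt] at hb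
    | node lq xq rq =>
      simp [subtreeAt] at hb
      subst hb
      exact ⟨xq, rq, rfl⟩

lemma subtree_concat_R {t : KTree α} {q : TPath} {s : KTree α}
    (h : subtreeAt t (q ++ [Dir.R]) = some s) :
    ∃ lq xq, subtreeAt t q = some (KTree.node lq xq s) := by
  have hb := subtreeAt_append t q [Dir.R]
  rw [h] at hb
  cases hq : subtreeAt t q with
  | none => rw [hq] at hb; simp at hb
  | some sq =>
    rw [hq] at hb
    cases sq with
    | leaf => simp [subtreeAt] at hb
    | node lq xq rq =>
      simp [subtreeAt] at hb
      subst hb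
      exact ⟨lq, xq, rfl⟩

lemma step_up_concat (t : KTree α) (q : TPath) (d : Dir) :
    step (t, q ++ [d]) Op.up = (t, q) := by
  simp [List.dropLast_concat]

lemma step_rot_concat (t : KTree α) (q : TPath) (d : Dir) :
    step (t, q ++ [d]) Op.rotate = (rotateAt t (q ++ [d]), q) := by
  simp [List.dropLast_concat]

end BSTSim

namespace BSTSim
variable {α : Type*} {γ : Type*}

lemma engine (f : α → γ) (A0 : Ctx γ) (ops : List Op) :
    ∀ (t : KTree α) (p : TPath) (l : KTree α) (x : α) (r : KTree α),
      subtreeAt t p = some (KTree.node l x r) →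
      ValidOps (t, p) ops →
      ∀ (SA : KTree γ) (kA : γ) (kB : γ) (SB : KTree γ),
        ctxs f t p A0 = ((SA, kA), (kB, SB)) →
        ∃ ops' : List Op,
          ValidOps (KTree.node (KTree.node SA kA (tmap f l)) (f x)
              (KTree.node (tmap f r) kB SB), ([] : TPath)) ops' ∧
          countM ops' ≤ 4 * countM ops + 3 * countR ops ∧
          countR ops' ≤ 2 * countM ops + countR ops ∧
          d3b [] ops' = true ∧ r2b [] ops' = true ∧
          ((vKeys (t, p) ops).map f).Sublist
            (vKeys (KTree.node (KTree.node SA kA (tmap f l)) (f x)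
              (KTree.node (tmap f r) kB SB), ([] : TPath)) ops') := by
  induction ops with
  | nil =>
    intro t p l x r hsub hv SA kA kB SB hctx
    refine ⟨[], trivial, by simp [countM], by simp [countR], rfl, rfl, ?_⟩
    have h1 : vKeys (t, p) [] = [x] := by simp [vKeys, run, keyAt_of hsub]
    rw [h1]
    simp [vKeys, run]
  | cons o os ih =>
    intro t p l x r hsub hv SA kA kB SB hctx
    obtain ⟨hcond, hvos⟩ := hv
    cases o with
    | down d =>
      cases d with
      | L =>
        have hsub' : subtreeAt t (p ++ [Dir.L]) = some l := by
          rw [subtreeAt_append, hsub]; simp [subtreeAt]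
        cases l with
        | leaf => simp [keyAt, hsub'] at hcond
        | node l₁ y r₁ =>
          have hctx2 : ctxs f t (p ++ [Dir.L]) A0 =
              ((SA, kA), (f x, KTree.node (tmap f r) kB SB)) := by
            rw [ctxs_append f t p [Dir.L] _ hsub A0, hctx, ctxs_consL, ctxs_nil]
          obtain ⟨rest, hvR, hcmR, hcrR, hd3R, hr2R, hslR⟩ :=
            ih t (p ++ [Dir.L]) l₁ y r₁ hsub' hvos SA kA (f x)
              (KTree.node (tmap f r) kB SB) hctx2
          obtain ⟨hV, hD3, hR2, hSL⟩ := glue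
            [Op.down Dir.L, Op.down Dir.R, Op.rotate, Op.up, Op.down Dir.L, Op.rotate] rest
            (KTree.node (KTree.node SA kA (KTree.node (tmap f l₁) (f y) (tmap f r₁))) (f x)
              (KTree.node (tmap f r) kB SB))
            (KTree.node (KTree.node SA kA (tmap f l₁)) (f y)
              (KTree.node (tmap f r₁) (f x) (KTree.node (tmap f r) kB SB)))
            (f x) (f y) [kA, f y, f y, f x, f y] ((vKeys (t, p ++ [Dir.L]) os).map f)
            (by simp [exec]) (by simp [ValidOps]) (by decide) (by decide) rfl
            (by simp [vKeys, run]) rfl hvR hd3R hr2R hslR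
          refine ⟨_, hV, ?_, ?_, hD3, hR2, ?_⟩
          · rw [countM_append]
            have h1 : countM [Op.down Dir.L, Op.down Dir.R, Op.rotate, Op.up,
              Op.down Dir.L, Op.rotate] = 4 := rfl
            have h2 : countM (Op.down Dir.L :: os) = countM os + 1 := rfl
            have h3 : countR (Op.down Dir.L :: os) = countR os := rfl
            rw [h1, h2, h3]; omega
          · rw [countR_append]
            have h1 : countR [Op.down Dir.L, Op.down Dir.R, Op.rotate, Op.up,
              Op.down Dir.L, Op.rotate] = 2 := rfl
            have h2 : countM (Op.down Dir.L :: os) = countM os + 1 := rfl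
            have h3 : countR (Op.down Dir.L :: os) = countR os := rfl
            rw [h1, h2, h3]; omega
          · have hvk : vKeys (t, p) (Op.down Dir.L :: os) =
                x :: vKeys (t, p ++ [Dir.L]) os := by
              rw [vKeys_cons (t, p) _ os x (keyAt_of hsub)]; rfl
            rw [hvk, List.map_cons]
            exact hSL
      | R =>
        have hsub' : subtreeAt t (p ++ [Dir.R]) = some r := by
          rw [subtreeAt_append, hsub]; simp [subtreeAt]
        cases r with
        | leaf => simp [keyAt, hsub'] at hcond
        | node l₂ y r₂ =>
          have hctx2 : ctxs f t (p ++ [Dir.R]) A0 =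
              ((KTree.node SA kA (tmap f l), f x), (kB, SB)) := by
            rw [ctxs_append f t p [Dir.R] _ hsub A0, hctx, ctxs_consR, ctxs_nil]
          obtain ⟨rest, hvR, hcmR, hcrR, hd3R, hr2R, hslR⟩ :=
            ih t (p ++ [Dir.R]) l₂ y r₂ hsub' hvos
              (KTree.node SA kA (tmap f l)) (f x) kB SB hctx2
          obtain ⟨hV, hD3, hR2, hSL⟩ := glue
            [Op.down Dir.R, Op.down Dir.L, Op.rotate, Op.up, Op.down Dir.R, Op.rotate] rest
            (KTree.node (KTree.node SA kA (tmap f l)) (f x)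
              (KTree.node (KTree.node (tmap f l₂) (f y) (tmap f r₂)) kB SB))
            (KTree.node (KTree.node (KTree.node SA kA (tmap f l)) (f x) (tmap f l₂)) (f y)
              (KTree.node (tmap f r₂) kB SB))
            (f x) (f y) [kB, f y, f y, f x, f y] ((vKeys (t, p ++ [Dir.R]) os).map f)
            (by simp [exec]) (by simp [ValidOps]) (by decide) (by decide) rfl
            (by simp [vKeys, run]) rfl hvR hd3R hr2R hslR
          refine ⟨_, hV, ?_, ?_, hD3, hR2, ?_⟩
          · rw [countM_append]
            have h1 : countM [Op.down Dir.R, Op.down Dir.L, Op.rotate, Op.up,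
              Op.down Dir.R, Op.rotate] = 4 := rfl
            have h2 : countM (Op.down Dir.R :: os) = countM os + 1 := rfl
            have h3 : countR (Op.down Dir.R :: os) = countR os := rfl
            rw [h1, h2, h3]; omega
          · rw [countR_append]
            have h1 : countR [Op.down Dir.R, Op.down Dir.L, Op.rotate, Op.up,
              Op.down Dir.R, Op.rotate] = 2 := rfl
            have h2 : countM (Op.down Dir.R :: os) = countM os + 1 := rfl
            have h3 : countR (Op.down Dir.R :: os) = countR os := rfl
            rw [h1, h2, h3]; omega
          · have hvk : vKeys (t, p) (Op.down Dir.R :: os) =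
                x :: vKeys (t, p ++ [Dir.R]) os := by
              rw [vKeys_cons (t, p) _ os x (keyAt_of hsub)]; rfl
            rw [hvk, List.map_cons]
            exact hSL
    | up =>
      obtain ⟨q, d, rfl⟩ : ∃ q d, p = q ++ [d] := by
        rcases List.eq_nil_or_concat p with rfl | ⟨q, d, h⟩
        · exact absurd rfl hcond
        · exact ⟨q, d, by rw [h, List.concat_eq_append]⟩
      rw [step_up_concat] at hvos
      cases d with
      | L =>
        obtain ⟨xq, rq, hsubq⟩ := subtree_concat_L hsub
        rcases hCq : ctxs f t q A0 with ⟨⟨SAq, kAq⟩, kBq, SBq⟩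
        have hctx2 : ctxs f t (q ++ [Dir.L]) A0 =
            ((SAq, kAq), (f xq, KTree.node (tmap f rq) kBq SBq)) := by
          rw [ctxs_append f t q [Dir.L] _ hsubq A0, hCq, ctxs_consL, ctxs_nil]
        rw [hctx] at hctx2
        simp only [Prod.mk.injEq] at hctx2
        obtain ⟨⟨h1, h2⟩, h3, h4⟩ := hctx2
        subst h1; subst h2; subst h3; subst h4
        obtain ⟨rest, hvR, hcmR, hcrR, hd3R, hr2R, hslR⟩ :=
          ih t q (KTree.node l x r) xq rq hsubq hvos SA kA kBq SBq hCq
        obtain ⟨hV, hD3, hR2, hSL⟩ := glue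
          [Op.down Dir.R, Op.rotate, Op.down Dir.L, Op.down Dir.L, Op.rotate, Op.up] rest
          (KTree.node (KTree.node SA kA (tmap f l)) (f x)
            (KTree.node (tmap f r) (f xq) (KTree.node (tmap f rq) kBq SBq)))
          (KTree.node (KTree.node SA kA (KTree.node (tmap f l) (f x) (tmap f r))) (f xq)
            (KTree.node (tmap f rq) kBq SBq))
          (f x) (f xq) [f xq, f xq, f x, kA, kA] ((vKeys (t, q) os).map f)
          (by simp [exec]) (by simp [ValidOps]) (by decide) (by decide) rfl
          (by simp [vKeys, run]) rfl hvR hd3R hr2R hslR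
        refine ⟨_, hV, ?_, ?_, hD3, hR2, ?_⟩
        · rw [countM_append]
          have h1 : countM [Op.down Dir.R, Op.rotate, Op.down Dir.L, Op.down Dir.L,
            Op.rotate, Op.up] = 4 := rfl
          have h2 : countM (Op.up :: os) = countM os + 1 := rfl
          have h3 : countR (Op.up :: os) = countR os := rfl
          rw [h1, h2, h3]; omega
        · rw [countR_append]
          have h1 : countR [Op.down Dir.R, Op.rotate, Op.down Dir.L, Op.down Dir.L,
            Op.rotate, Op.up] = 2 := rfl
          have h2 : countM (Op.up :: os) = countM os + 1 := rfl
          have h3 : countR (Op.up :: os) = countR os := rfl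
          rw [h1, h2, h3]; omega
        · have hvk : vKeys (t, q ++ [Dir.L]) (Op.up :: os) = x :: vKeys (t, q) os := by
            rw [vKeys_cons _ _ os x (keyAt_of hsub), step_up_concat]
          rw [hvk, List.map_cons]
          exact hSL
      | R =>
        obtain ⟨lq, xq, hsubq⟩ := subtree_concat_R hsub
        rcases hCq : ctxs f t q A0 with ⟨⟨SAq, kAq⟩, kBq, SBq⟩
        have hctx2 : ctxs f t (q ++ [Dir.R]) A0 =
            ((KTree.node SAq kAq (tmap f lq), f xq), (kBq, SBq)) := by
          rw [ctxs_append f t q [Dir.R] _ hsubq A0, hCq, ctxs_consR, ctxs_nil]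
        rw [hctx] at hctx2
        simp only [Prod.mk.injEq] at hctx2
        obtain ⟨⟨h1, h2⟩, h3, h4⟩ := hctx2
        subst h1; subst h2; subst h3; subst h4
        obtain ⟨rest, hvR, hcmR, hcrR, hd3R, hr2R, hslR⟩ :=
          ih t q lq xq (KTree.node l x r) hsubq hvos SAq kAq kB SB hCq
        obtain ⟨hV, hD3, hR2, hSL⟩ := glue
          [Op.down Dir.L, Op.rotate, Op.down Dir.R, Op.down Dir.R, Op.rotate, Op.up] rest
          (KTree.node (KTree.node (KTree.node SAq kAq (tmap f lq)) (f xq) (tmap f l)) (f x)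
            (KTree.node (tmap f r) kB SB))
          (KTree.node (KTree.node SAq kAq (tmap f lq)) (f xq)
            (KTree.node (KTree.node (tmap f l) (f x) (tmap f r)) kB SB))
          (f x) (f xq) [f xq, f xq, f x, kB, kB] ((vKeys (t, q) os).map f)
          (by simp [exec]) (by simp [ValidOps]) (by decide) (by decide) rfl
          (by simp [vKeys, run]) rfl hvR hd3R hr2R hslR
        refine ⟨_, hV, ?_, ?_, hD3, hR2, ?_⟩
        · rw [countM_append]
          have h1 : countM [Op.down Dir.L, Op.rotate, Op.down Dir.R, Op.down Dir.R,
            Op.rotate, Op.up] = 4 := rfl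
          have h2 : countM (Op.up :: os) = countM os + 1 := rfl
          have h3 : countR (Op.up :: os) = countR os := rfl
          rw [h1, h2, h3]; omega
        · rw [countR_append]
          have h1 : countR [Op.down Dir.L, Op.rotate, Op.down Dir.R, Op.down Dir.R,
            Op.rotate, Op.up] = 2 := rfl
          have h2 : countM (Op.up :: os) = countM os + 1 := rfl
          have h3 : countR (Op.up :: os) = countR os := rfl
          rw [h1, h2, h3]; omega
        · have hvk : vKeys (t, q ++ [Dir.R]) (Op.up :: os) = x :: vKeys (t, q) os := by
            rw [vKeys_cons _ _ os x (keyAt_of hsub), step_up_concat]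
          rw [hvk, List.map_cons]
          exact hSL
    | rotate =>
      obtain ⟨q, d, rfl⟩ : ∃ q d, p = q ++ [d] := by
        rcases List.eq_nil_or_concat p with rfl | ⟨q, d, h⟩
        · exact absurd rfl hcond
        · exact ⟨q, d, by rw [h, List.concat_eq_append]⟩
      rw [step_rot_concat] at hvos
      cases d with
      | L =>
        obtain ⟨xq, rq, hsubq⟩ := subtree_concat_L hsub
        rcases hCq : ctxs f t q A0 with ⟨⟨SAq, kAq⟩, kBq, SBq⟩
        have hctx2 : ctxs f t (q ++ [Dir.L]) A0 =
            ((SAq, kAq), (f xq, KTree.node (tmap f rq) kBq SBq)) := by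
          rw [ctxs_append f t q [Dir.L] _ hsubq A0, hCq, ctxs_consL, ctxs_nil]
        rw [hctx] at hctx2
        simp only [Prod.mk.injEq] at hctx2
        obtain ⟨⟨h1, h2⟩, h3, h4⟩ := hctx2
        subst h1; subst h2; subst h3; subst h4
        have hrot := rotateAt_concat f q t Dir.L _ hsubq
        have hsub2 : subtreeAt (rotateAt t (q ++ [Dir.L])) q =
            some (KTree.node l x (KTree.node r xq rq)) := by
          simpa using hrot.1
        have hctx3 : ctxs f (rotateAt t (q ++ [Dir.L])) q A0 = ((SA, kA), (kBq, SBq)) := by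
          rw [hrot.2 A0, hCq]
        obtain ⟨rest, hvR, hcmR, hcrR, hd3R, hr2R, hslR⟩ :=
          ih (rotateAt t (q ++ [Dir.L])) q l x (KTree.node r xq rq) hsub2 hvos SA kA kBq SBq hctx3
        obtain ⟨hV, hD3, hR2, hSL⟩ := glue
          [Op.down Dir.R, Op.down Dir.R, Op.rotate, Op.up] rest
          (KTree.node (KTree.node SA kA (tmap f l)) (f x)
            (KTree.node (tmap f r) (f xq) (KTree.node (tmap f rq) kBq SBq)))
          (KTree.node (KTree.node SA kA (tmap f l)) (f x)
            (KTree.node (KTree.node (tmap f r) (f xq) (tmap f rq)) kBq SBq))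
          (f x) (f x) [f xq, kBq, kBq] ((vKeys (rotateAt t (q ++ [Dir.L]), q) os).map f)
          (by simp [exec]) (by simp [ValidOps]) (by decide) (by decide) rfl
          (by simp [vKeys, run]) rfl hvR hd3R hr2R hslR
        refine ⟨_, hV, ?_, ?_, hD3, hR2, ?_⟩
        · rw [countM_append]
          have h1 : countM [Op.down Dir.R, Op.down Dir.R, Op.rotate, Op.up] = 3 := rfl
          have h2 : countM (Op.rotate :: os) = countM os := rfl
          have h3 : countR (Op.rotate :: os) = countR os + 1 := rfl
          rw [h1, h2, h3]; omega
        · rw [countR_append]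
          have h1 : countR [Op.down Dir.R, Op.down Dir.R, Op.rotate, Op.up] = 1 := rfl
          have h2 : countM (Op.rotate :: os) = countM os := rfl
          have h3 : countR (Op.rotate :: os) = countR os + 1 := rfl
          rw [h1, h2, h3]; omega
        · have hvk : vKeys (t, q ++ [Dir.L]) (Op.rotate :: os) =
              x :: vKeys (rotateAt t (q ++ [Dir.L]), q) os := by
            rw [vKeys_cons _ _ os x (keyAt_of hsub), step_rot_concat]
          rw [hvk, List.map_cons]
          exact hSL
      | R =>
        obtain ⟨lq, xq, hsubq⟩ := subtree_concat_R hsub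
        rcases hCq : ctxs f t q A0 with ⟨⟨SAq, kAq⟩, kBq, SBq⟩
        have hctx2 : ctxs f t (q ++ [Dir.R]) A0 =
            ((KTree.node SAq kAq (tmap f lq), f xq), (kBq, SBq)) := by
          rw [ctxs_append f t q [Dir.R] _ hsubq A0, hCq, ctxs_consR, ctxs_nil]
        rw [hctx] at hctx2
        simp only [Prod.mk.injEq] at hctx2
        obtain ⟨⟨h1, h2⟩, h3, h4⟩ := hctx2
        subst h1; subst h2; subst h3; subst h4
        have hrot := rotateAt_concat f q t Dir.R _ hsubq
        have hsub2 : subtreeAt (rotateAt t (q ++ [Dir.R])) q =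
            some (KTree.node (KTree.node lq xq l) x r) := by
          simpa using hrot.1
        have hctx3 : ctxs f (rotateAt t (q ++ [Dir.R])) q A0 = ((SAq, kAq), (kB, SB)) := by
          rw [hrot.2 A0, hCq]
        obtain ⟨rest, hvR, hcmR, hcrR, hd3R, hr2R, hslR⟩ :=
          ih (rotateAt t (q ++ [Dir.R])) q (KTree.node lq xq l) x r hsub2 hvos SAq kAq kB SB hctx3
        obtain ⟨hV, hD3, hR2, hSL⟩ := glue
          [Op.down Dir.L, Op.down Dir.L, Op.rotate, Op.up] rest
          (KTree.node (KTree.node (KTree.node SAq kAq (tmap f lq)) (f xq) (tmap f l)) (f x)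
            (KTree.node (tmap f r) kB SB))
          (KTree.node (KTree.node SAq kAq (KTree.node (tmap f lq) (f xq) (tmap f l))) (f x)
            (KTree.node (tmap f r) kB SB))
          (f x) (f x) [f xq, kAq, kAq] ((vKeys (rotateAt t (q ++ [Dir.R]), q) os).map f)
          (by simp [exec]) (by simp [ValidOps]) (by decide) (by decide) rfl
          (by simp [vKeys, run]) rfl hvR hd3R hr2R hslR
        refine ⟨_, hV, ?_, ?_, hD3, hR2, ?_⟩
        · rw [countM_append]
          have h1 : countM [Op.down Dir.L, Op.down Dir.L, Op.rotate, Op.up] = 3 := rfl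
          have h2 : countM (Op.rotate :: os) = countM os := rfl
          have h3 : countR (Op.rotate :: os) = countR os + 1 := rfl
          rw [h1, h2, h3]; omega
        · rw [countR_append]
          have h1 : countR [Op.down Dir.L, Op.down Dir.L, Op.rotate, Op.up] = 1 := rfl
          have h2 : countM (Op.rotate :: os) = countM os := rfl
          have h3 : countR (Op.rotate :: os) = countR os + 1 := rfl
          rw [h1, h2, h3]; omega
        · have hvk : vKeys (t, q ++ [Dir.R]) (Op.rotate :: os) =
              x :: vKeys (rotateAt t (q ++ [Dir.R]), q) os := by
            rw [vKeys_cons _ _ os x (keyAt_of hsub), step_rot_concat]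
          rw [hvk, List.map_cons]
          exact hSL
end BSTSim


/-- **Simulation lemma.**  Every valid access sequence on `T` with `M` cursor
    moves and `R` rotations can be simulated by a valid restricted sequence on
    a tree `T'` whose keys are those of `T` together with two sentinels `⊥`
    (smaller than all keys) and `⊤` (larger than all keys), using at most
    `4M + 3R` moves and `2M + R` rotations, and such that the key sequence
    visited by `T`'s cursor is a subsequence of that visited by `T'`'s cursor. -/
theorem simulation {α : Type*} [LinearOrder α] (T : KTree α) (ops : List Op)
    (hvalid : ValidOps (T, ([] : TPath)) ops)
    (M R : ℕ)
    (hM : M = (ops.filter fun o => o.isMove).length)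
    (hR : R = (ops.filter fun o => o = Op.rotate).length) :
    ∃ (T' : KTree (WithBot (WithTop α))) (ops' : List Op),
      keys T' = (⊥ : WithBot (WithTop α)) ::ₘ
          ((⊤ : WithTop α) : WithBot (WithTop α)) ::ₘ
          (keys T).map (fun a => ((a : WithTop α) : WithBot (WithTop α))) ∧
      ValidOps (T', ([] : TPath)) ops' ∧
      (ops'.filter fun o => o.isMove).length ≤ 4 * M + 3 * R ∧
      (ops'.filter fun o => o = Op.rotate).length ≤ 2 * M + R ∧
      Restricted T' ops' ∧
      ((visitedKeys T ops).map
          (fun a => ((a : WithTop α) : WithBot (WithTop α)))).Sublist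
        (visitedKeys T' ops') := by
  cases T with
  | leaf =>
    have hops : ops = [] := by
      cases ops with
      | nil => rfl
      | cons o os =>
        obtain ⟨hcond, -⟩ := hvalid
        cases o with
        | up => exact absurd rfl hcond
        | down d => simp [BSTSim.keyAt_leaf] at hcond
        | rotate => exact absurd rfl hcond
    subst hops
    refine ⟨KTree.node KTree.leaf ⊥
      (KTree.node KTree.leaf ((⊤ : WithTop α) : WithBot (WithTop α)) KTree.leaf), [],
      ?_, trivial, by simp [hM, hR], by simp [hM, hR],
      BSTSim.restricted_of _ [] rfl rfl, ?_⟩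
    · simp [keys]
    · simp [visitedKeys, run]
  | node l x r =>
    have mset_bind : ∀ (s : Multiset α) (g : α → WithTop α),
        ((do let a ← s; pure (g a)) : Multiset (WithTop α)) = s.map g :=
      fun s g => Multiset.bind_singleton (s := s) g
    have list_flat : ∀ (L : List α) (g : α → WithTop α),
        ((do let a ← L; pure (g a)) : List (WithTop α)) = L.map g := by
      intro L g; induction L with
      | nil => rfl
      | cons a L ih =>
        show List.flatMap _ _ = _
        rw [List.flatMap_cons]
        show (g a :: L.flatMap fun a => pure (g a)) = _
        rw [show (L.flatMap fun a => pure (g a)) = List.map g L from ih]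
        rfl
    obtain ⟨ops', hV, hcm, hcr, hd3, hr2, hsl⟩ :=
      BSTSim.engine (fun a : α => ((a : WithTop α) : WithBot (WithTop α)))
        ((KTree.leaf, (⊥ : WithBot (WithTop α))),
          (((⊤ : WithTop α) : WithBot (WithTop α)), KTree.leaf))
        ops (KTree.node l x r) [] l x r (BSTSim.subtreeAt_nil _) hvalid
        KTree.leaf ⊥ (((⊤ : WithTop α) : WithBot (WithTop α))) KTree.leaf
        (BSTSim.ctxs_nil _ _ _)
    refine ⟨_, ops', ?_, hV, ?_, ?_, BSTSim.restricted_of _ _ hd3 hr2, ?_⟩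
    · rw [mset_bind, Multiset.map_map]
      simp only [keys, BSTSim.keys_tmap, Multiset.map_cons, Multiset.map_add,
        Multiset.map_singleton, Function.comp, ← Multiset.singleton_add, add_zero, zero_add]
      abel
    · rw [hM, hR]; exact hcm
    · rw [hM, hR]; exact hcr
    · rw [list_flat, List.map_map]
      exact hsl
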